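/- Let d ≥ 2, γ ∈ (0,1), ε > 0, κ₁ > 0, τ > 0, and let h₁, h₂ : B'_{2R} → ℝ (B'_{2R} ⊂ ℝ^{d−1}) be C¹ functions satisfying |∇h_i(x')| ≤ κ₁ |x'|^γ for i = 1,2 and δ(x') := ε + h₁(x') − h₂(x') ≥ τ |x'|^{1+γ} + ε for all x' ∈ B'_{2R}. Set ϑ := 1/(8 κ₁ max{1, τ^{−γ/(1+γ)}}). Then for every z' ∈ B'_R and every 0 < s ≤ ϑ δ(z')^{1/(1+γ)} and every x' with |x' − z'| < s ≤ |z'| + s ≤ 2R, one has (1/2) δ(z') ≤ δ(x') ≤ (3/2) δ(z'). -/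

import Mathlib

set_option maxHeartbeats 1000000

lemma rpow_subadd' {a b p : ℝ} (ha : 0 ≤ a) (hb : 0 ≤ b) (hp : 0 ≤ p) (hp1 : p ≤ 1) :
    (a + b) ^ p ≤ a ^ p + b ^ p := by
  have h := NNReal.rpow_add_le_add_rpow a.toNNReal b.toNNReal hp hp1
  have h2 := NNReal.coe_le_coe.2 h
  push_cast [NNReal.coe_rpow, Real.coe_toNNReal _ ha, Real.coe_toNNReal _ hb] at h2
  exact h2

/-- Mean value estimate for `h₁ - h₂` on a ball of radius `t < 2R`. -/
lemma mvt_bound {d : ℕ} (γ κ₁ R : ℝ) (hγ0 : 0 < γ) (hκ : 0 ≤ κ₁)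
    (h₁ h₂ : EuclideanSpace ℝ (Fin (d - 1)) → ℝ)
    (hdiff₁ : ∀ x, ‖x‖ < 2 * R → DifferentiableAt ℝ h₁ x)
    (hdiff₂ : ∀ x, ‖x‖ < 2 * R → DifferentiableAt ℝ h₂ x)
    (hgrad₁ : ∀ x, ‖x‖ < 2 * R → ‖fderiv ℝ h₁ x‖ ≤ κ₁ * ‖x‖ ^ γ)
    (hgrad₂ : ∀ x, ‖x‖ < 2 * R → ‖fderiv ℝ h₂ x‖ ≤ κ₁ * ‖x‖ ^ γ)
    (a b : EuclideanSpace ℝ (Fin (d - 1))) (t : ℝ)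
    (ha : ‖a‖ ≤ t) (hb : ‖b‖ ≤ t) (ht : t < 2 * R) :
    |(h₁ b - h₂ b) - (h₁ a - h₂ a)| ≤ 2 * κ₁ * t ^ γ * ‖b - a‖ := by
  have ht0 : (0:ℝ) ≤ t := le_trans (norm_nonneg a) ha
  have key : ∀ y ∈ Metric.closedBall (0 : EuclideanSpace ℝ (Fin (d - 1))) t,
      ‖y‖ < 2 * R := by
    intro y hy
    simp only [Metric.mem_closedBall, dist_zero_right] at hy
    exact lt_of_le_of_lt hy ht
  have hdiff : ∀ y ∈ Metric.closedBall (0 : EuclideanSpace ℝ (Fin (d - 1))) t,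
      DifferentiableAt ℝ (fun y => h₁ y - h₂ y) y := fun y hy =>
    (hdiff₁ y (key y hy)).sub (hdiff₂ y (key y hy))
  have hbound : ∀ y ∈ Metric.closedBall (0 : EuclideanSpace ℝ (Fin (d - 1))) t,
      ‖fderiv ℝ (fun y => h₁ y - h₂ y) y‖ ≤ 2 * κ₁ * t ^ γ := by
    intro y hy
    have hy2R := key y hy
    have hyt : ‖y‖ ≤ t := by
      simpa only [Metric.mem_closedBall, dist_zero_right] using hy
    rw [fderiv_fun_sub (hdiff₁ y hy2R) (hdiff₂ y hy2R)]
    have h1 := hgrad₁ y hy2R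
    have h2 := hgrad₂ y hy2R
    have hle : ‖y‖ ^ γ ≤ t ^ γ := Real.rpow_le_rpow (norm_nonneg y) hyt hγ0.le
    calc ‖fderiv ℝ h₁ y - fderiv ℝ h₂ y‖ ≤ ‖fderiv ℝ h₁ y‖ + ‖fderiv ℝ h₂ y‖ :=
          norm_sub_le _ _
      _ ≤ κ₁ * ‖y‖ ^ γ + κ₁ * ‖y‖ ^ γ := by linarith
      _ ≤ 2 * κ₁ * t ^ γ := by nlinarith
  have hmem : ∀ c : EuclideanSpace ℝ (Fin (d - 1)), ‖c‖ ≤ t →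
      c ∈ Metric.closedBall (0 : EuclideanSpace ℝ (Fin (d - 1))) t := by
    intro c hc; simpa only [Metric.mem_closedBall, dist_zero_right] using hc
  have := (convex_closedBall (0 : EuclideanSpace ℝ (Fin (d - 1))) t).norm_image_sub_le_of_norm_fderiv_le
    hdiff hbound (hmem a ha) (hmem b hb)
  simpa [Real.norm_eq_abs] using this



/-- Comparability of the channel thickness `δ(x') = ε + h₁(x') − h₂(x')` on small horizontal
scales: if `|∇h_i| ≤ κ₁|x'|^γ` and `δ ≥ ε + τ|x'|^{1+γ}`, then with
`ϑ = 1/(8κ₁ max{1, τ^{−γ/(1+γ)}})`, for `|z'| < R`, `0 < s ≤ ϑ δ(z')^{1/(1+γ)}`,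
`|x' − z'| < s` and `|z'| + s ≤ 2R`, one has `δ(z')/2 ≤ δ(x') ≤ (3/2) δ(z')`. -/
theorem stmt_12 (d : ℕ) (hd : 2 ≤ d) (γ ε κ₁ τ R : ℝ)
    (hγ : γ ∈ Set.Ioo (0 : ℝ) 1) (hε : 0 < ε) (hκ : 0 < κ₁) (hτ : 0 < τ) (hR : 0 < R)
    (h₁ h₂ : EuclideanSpace ℝ (Fin (d - 1)) → ℝ)
    (hdiff₁ : ∀ x, ‖x‖ < 2 * R → DifferentiableAt ℝ h₁ x)
    (hdiff₂ : ∀ x, ‖x‖ < 2 * R → DifferentiableAt ℝ h₂ x)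
    (hgrad₁ : ∀ x, ‖x‖ < 2 * R → ‖fderiv ℝ h₁ x‖ ≤ κ₁ * ‖x‖ ^ γ)
    (hgrad₂ : ∀ x, ‖x‖ < 2 * R → ‖fderiv ℝ h₂ x‖ ≤ κ₁ * ‖x‖ ^ γ)
    (hδ : ∀ x, ‖x‖ < 2 * R → ε + τ * ‖x‖ ^ (1 + γ) ≤ ε + h₁ x - h₂ x) :
    ∀ z, ‖z‖ < R → ∀ s : ℝ, 0 < s →
      s ≤ (1 / (8 * κ₁ * max 1 (τ ^ (-(γ / (1 + γ))))))
            * (ε + h₁ z - h₂ z) ^ (1 / (1 + γ)) →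
      ∀ x, ‖x - z‖ < s → ‖z‖ + s ≤ 2 * R →
        (ε + h₁ z - h₂ z) / 2 ≤ ε + h₁ x - h₂ x ∧
          ε + h₁ x - h₂ x ≤ 3 / 2 * (ε + h₁ z - h₂ z) := by
  obtain ⟨hγ0, hγ1⟩ := hγ
  intro z hz s hs0 hsθ x hxz hs2R
  set M : ℝ := max 1 (τ ^ (-(γ / (1 + γ)))) with hM_def
  have hM1 : (1:ℝ) ≤ M := le_max_left _ _
  have hMpos : (0:ℝ) < M := lt_of_lt_of_le one_pos hM1
  set θ : ℝ := 1 / (8 * κ₁ * M) with hθ_def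
  have hθpos : 0 < θ := by positivity
  have h1γ : (0:ℝ) < 1 + γ := by linarith
  have h1γ' : (1:ℝ) + γ ≠ 0 := ne_of_gt h1γ
  set δz : ℝ := ε + h₁ z - h₂ z with hδz_def
  have hz2R : ‖z‖ < 2 * R := by linarith
  have hδz_lb : ε + τ * ‖z‖ ^ (1 + γ) ≤ δz := hδ z hz2R
  have hzn : (0:ℝ) ≤ τ * ‖z‖ ^ (1 + γ) := by positivity
  have hδz_pos : 0 < δz := by linarith
  -- the radius
  set t : ℝ := ‖z‖ + ‖x - z‖ with ht_def
  have ht0 : 0 ≤ t := by positivity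
  have ht2R : t < 2 * R := by
    have := norm_nonneg (x - z); simp only [ht_def]; linarith
  have hxt : ‖x‖ ≤ t := by
    have := norm_sub_norm_le x z; simp only [ht_def]; linarith
  have hzt : ‖z‖ ≤ t := by
    have := norm_nonneg (x - z); simp only [ht_def]; linarith
  have hvar := mvt_bound γ κ₁ R hγ0 hκ.le h₁ h₂ hdiff₁ hdiff₂ hgrad₁ hgrad₂
    z x t hzt hxt ht2R
  -- main estimate
  have hmain : 2 * κ₁ * t ^ γ * ‖x - z‖ ≤ δz / 2 := by
    rcases le_or_gt τ (8 * κ₁) with hcase | hcase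
    · -- Case B : τ ≤ 8κ₁; use the scale bound on s
      have hsub : t ^ γ ≤ ‖z‖ ^ γ + ‖x - z‖ ^ γ :=
        rpow_subadd' (norm_nonneg z) (norm_nonneg (x - z)) hγ0.le hγ1.le
      have hxs : ‖x - z‖ ≤ s := hxz.le
      have hxγ : ‖x - z‖ ^ γ ≤ s ^ γ :=
        Real.rpow_le_rpow (norm_nonneg _) hxs hγ0.le
      have hcoef : 2 * κ₁ * M * θ = 1 / 4 := by
        rw [hθ_def]; field_simp; ring
      have hprod : δz ^ (γ / (1 + γ)) * δz ^ (1 / (1 + γ)) = δz := by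
        rw [← Real.rpow_add hδz_pos,
          show γ / (1 + γ) + 1 / (1 + γ) = 1 by field_simp; ring, Real.rpow_one]
      -- A1 : 2κ₁ ‖z‖^γ s ≤ δz/4
      have hzpow : ‖z‖ ^ (1 + γ) ≤ δz / τ := by
        rw [le_div_iff₀ hτ]; nlinarith
      have hzγ : ‖z‖ ^ γ ≤ M * δz ^ (γ / (1 + γ)) := by
        have e1 : ‖z‖ ^ γ = (‖z‖ ^ (1 + γ)) ^ (γ / (1 + γ)) := by
          rw [← Real.rpow_mul (norm_nonneg z)]; congr 1; field_simp
        have e2 : (‖z‖ ^ (1 + γ)) ^ (γ / (1 + γ)) ≤ (δz / τ) ^ (γ / (1 + γ)) :=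
          Real.rpow_le_rpow (Real.rpow_nonneg (norm_nonneg z) _) hzpow (by positivity)
        have e3 : (δz / τ) ^ (γ / (1 + γ))
            = δz ^ (γ / (1 + γ)) * τ ^ (-(γ / (1 + γ))) := by
          rw [Real.div_rpow hδz_pos.le hτ.le, Real.rpow_neg hτ.le, div_eq_mul_inv]
        have e4 : τ ^ (-(γ / (1 + γ))) ≤ M := le_max_right _ _
        calc ‖z‖ ^ γ ≤ δz ^ (γ / (1 + γ)) * τ ^ (-(γ / (1 + γ))) := by
              rw [e1]; rw [e3] at e2; exact e2
          _ ≤ δz ^ (γ / (1 + γ)) * M := by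
              have : (0:ℝ) ≤ δz ^ (γ / (1 + γ)) := by positivity
              nlinarith
          _ = M * δz ^ (γ / (1 + γ)) := by ring
      have hA1 : 2 * κ₁ * (‖z‖ ^ γ * s) ≤ δz / 4 := by
        have hmm : ‖z‖ ^ γ * s ≤ (M * δz ^ (γ / (1 + γ))) * (θ * δz ^ (1 / (1 + γ))) :=
          mul_le_mul hzγ hsθ hs0.le (by positivity)
        have := mul_le_mul_of_nonneg_left hmm (by positivity : (0:ℝ) ≤ 2 * κ₁)
        calc 2 * κ₁ * (‖z‖ ^ γ * s)
            ≤ 2 * κ₁ * ((M * δz ^ (γ / (1 + γ))) * (θ * δz ^ (1 / (1 + γ)))) := this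
          _ = (2 * κ₁ * M * θ) * (δz ^ (γ / (1 + γ)) * δz ^ (1 / (1 + γ))) := by ring
          _ = δz / 4 := by rw [hcoef, hprod]; ring
      -- A2 : 2κ₁ s^γ s ≤ δz/4
      have hθγM : θ ^ γ ≤ M := by
        rcases le_or_gt 1 τ with h1τ | h1τ
        · have hτe : τ ^ (-(γ / (1 + γ))) ≤ 1 :=
            Real.rpow_le_one_of_one_le_of_nonpos h1τ
              (neg_nonpos.2 (by positivity))
          have hθ1 : θ ≤ 1 := by
            rw [hθ_def]
            rw [div_le_one (by positivity)]
            nlinarith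
          calc θ ^ γ ≤ 1 := Real.rpow_le_one hθpos.le hθ1 hγ0.le
            _ ≤ M := hM1
        · have hN : τ ^ (-(γ / (1 + γ))) ≤ M := le_max_right _ _
          have hNpos : (0:ℝ) < τ ^ (-(γ / (1 + γ))) := Real.rpow_pos_of_pos hτ _
          have hmulN : τ * τ ^ (-(γ / (1 + γ))) = τ ^ (1 - γ / (1 + γ)) := by
            rw [show (1:ℝ) - γ / (1 + γ) = 1 + -(γ / (1 + γ)) by ring,
              Real.rpow_add hτ, Real.rpow_one]
          have hθle : θ ≤ τ ^ (γ / (1 + γ) - 1) := by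
            have hden : τ * τ ^ (-(γ / (1 + γ))) ≤ 8 * κ₁ * M := by
              nlinarith
            have : θ ≤ 1 / (τ * τ ^ (-(γ / (1 + γ)))) := by
              rw [hθ_def]
              apply one_div_le_one_div_of_le (by positivity) hden
            calc θ ≤ 1 / (τ * τ ^ (-(γ / (1 + γ)))) := this
              _ = τ ^ (γ / (1 + γ) - 1) := by
                  rw [hmulN, one_div, ← Real.rpow_neg hτ.le]
                  congr 1; ring
          calc θ ^ γ ≤ (τ ^ (γ / (1 + γ) - 1)) ^ γ :=
                Real.rpow_le_rpow hθpos.le hθle hγ0.le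
            _ = τ ^ ((γ / (1 + γ) - 1) * γ) := by
                rw [← Real.rpow_mul hτ.le]
            _ = τ ^ (-(γ / (1 + γ))) := by
                congr 1; field_simp; ring
            _ ≤ M := hN
      have hd1 : (δz ^ (1 / (1 + γ))) ^ γ * δz ^ (1 / (1 + γ)) = δz := by
        rw [← Real.rpow_mul hδz_pos.le, ← Real.rpow_add hδz_pos,
          show 1 / (1 + γ) * γ + 1 / (1 + γ) = 1 by field_simp; ring, Real.rpow_one]
      have hsγ : s ^ γ ≤ θ ^ γ * (δz ^ (1 / (1 + γ))) ^ γ := by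
        rw [← Real.mul_rpow hθpos.le (by positivity)]
        exact Real.rpow_le_rpow hs0.le hsθ hγ0.le
      have hA2 : 2 * κ₁ * (s ^ γ * s) ≤ δz / 4 := by
        have step1 : 2 * κ₁ * (s ^ γ * s)
            ≤ 2 * κ₁ * ((θ ^ γ * (δz ^ (1 / (1 + γ))) ^ γ) * (θ * δz ^ (1 / (1 + γ)))) := by
          have hmm : s ^ γ * s ≤ (θ ^ γ * (δz ^ (1 / (1 + γ))) ^ γ) * (θ * δz ^ (1 / (1 + γ))) :=
            mul_le_mul hsγ hsθ hs0.le (by positivity)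
          exact mul_le_mul_of_nonneg_left hmm (by positivity)
        have step2 : 2 * κ₁ * ((θ ^ γ * (δz ^ (1 / (1 + γ))) ^ γ) * (θ * δz ^ (1 / (1 + γ))))
            = 2 * κ₁ * (θ ^ γ * θ) * δz := by
          rw [show 2 * κ₁ * ((θ ^ γ * (δz ^ (1 / (1 + γ))) ^ γ) * (θ * δz ^ (1 / (1 + γ))))
            = 2 * κ₁ * (θ ^ γ * θ) * ((δz ^ (1 / (1 + γ))) ^ γ * δz ^ (1 / (1 + γ))) by ring, hd1]
        have step3 : 2 * κ₁ * (θ ^ γ * θ) * δz ≤ δz / 4 := by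
          have h4 : 2 * κ₁ * (θ ^ γ * θ) ≤ 2 * κ₁ * (M * θ) := by nlinarith
          have h5 : 2 * κ₁ * (M * θ) = 1 / 4 := by rw [hθ_def]; field_simp; ring
          nlinarith
        linarith [step1, step2.le, step3, step2.ge]
      have h0 : t ^ γ ≤ ‖z‖ ^ γ + s ^ γ := by linarith
      calc 2 * κ₁ * t ^ γ * ‖x - z‖ ≤ 2 * κ₁ * (‖z‖ ^ γ + s ^ γ) * s :=
            mul_le_mul (mul_le_mul_of_nonneg_left h0 (by positivity)) hxs
              (norm_nonneg _) (by positivity)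
        _ = 2 * κ₁ * (‖z‖ ^ γ * s) + 2 * κ₁ * (s ^ γ * s) := by ring
        _ ≤ δz / 2 := by linarith
    · -- Case A : 8κ₁ < τ; geometric argument via the value at the origin
      have hpow : ∀ r : ℝ, 0 ≤ r → r ^ γ * r = r ^ (1 + γ) := by
        intro r hr
        rw [Real.rpow_add' hr h1γ', Real.rpow_one]; ring
      have hC0 : ∀ y : EuclideanSpace ℝ (Fin (d - 1)), ‖y‖ < 2 * R →
          (τ - 2 * κ₁) * ‖y‖ ^ (1 + γ) ≤ h₁ 0 - h₂ 0 := by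
        intro y hy
        have hm := mvt_bound γ κ₁ R hγ0 hκ.le h₁ h₂ hdiff₁ hdiff₂ hgrad₁ hgrad₂
          0 y ‖y‖ (by simp) le_rfl hy
        rw [sub_zero] at hm
        have hpy := hpow ‖y‖ (norm_nonneg y)
        have hδy := hδ y hy
        have := abs_le.mp hm
        nlinarith [this.1, this.2]
      -- a vector of norm t
      have ht2R' : t < 2 * R := ht2R
      have hCt : (τ - 2 * κ₁) * t ^ (1 + γ) ≤ h₁ 0 - h₂ 0 := by
        have hd1 : 0 < d - 1 := by omega
        set y : EuclideanSpace ℝ (Fin (d - 1)) :=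
          EuclideanSpace.single (⟨0, hd1⟩ : Fin (d - 1)) t with hy_def
        have hny : ‖y‖ = t := by
          rw [hy_def, EuclideanSpace.norm_single, Real.norm_eq_abs, abs_of_nonneg ht0]
        have := hC0 y (by rw [hny]; exact ht2R')
        rwa [hny] at this
      have hmz := mvt_bound γ κ₁ R hγ0 hκ.le h₁ h₂ hdiff₁ hdiff₂ hgrad₁ hgrad₂
        0 z ‖z‖ (by simp) le_rfl hz2R
      rw [sub_zero] at hmz
      have hpz := hpow ‖z‖ (norm_nonneg z)
      have hzpow_t : ‖z‖ ^ (1 + γ) ≤ t ^ (1 + γ) :=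
        Real.rpow_le_rpow (norm_nonneg z) hzt (by positivity)
      have habs := abs_le.mp hmz
      have hδz_lb2 : ε + (τ - 4 * κ₁) * t ^ (1 + γ) ≤ δz := by
        nlinarith [habs.1, habs.2, mul_le_mul_of_nonneg_left hzpow_t hκ.le]
      have hT0 : (0:ℝ) ≤ t ^ (1 + γ) := by positivity
      have hpt := hpow t ht0
      have hstep : 2 * κ₁ * t ^ γ * ‖x - z‖ ≤ 2 * κ₁ * t ^ (1 + γ) := by
        have hxzt : ‖x - z‖ ≤ t := by
          have := norm_nonneg z; simp only [ht_def]; linarith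
        calc 2 * κ₁ * t ^ γ * ‖x - z‖ ≤ 2 * κ₁ * t ^ γ * t :=
              mul_le_mul_of_nonneg_left hxzt (by positivity)
          _ = 2 * κ₁ * t ^ (1 + γ) := by rw [mul_assoc, hpt]
      have : 2 * κ₁ * t ^ (1 + γ) ≤ δz / 2 := by
        have hfin := mul_le_mul_of_nonneg_right hcase.le hT0
        linarith
      linarith
  have hvar' : |(h₁ x - h₂ x) - (h₁ z - h₂ z)| ≤ δz / 2 := le_trans hvar hmain
  have habs := abs_le.mp hvar'
  obtain ⟨hl, hr⟩ := habs
  constructor <;> linarith [hδz_def.le, hδz_def.ge]
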